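/- For a fixed x in (0, π/2), the function t ↦ cosh(x/t)^t is decreasing on (0, ∞). -/

import Mathlib

open Real Set

private lemma gderiv (u : ℝ) :
    HasDerivAt (fun u : ℝ => u * Real.sinh u / Real.cosh u - Real.log (Real.cosh u))
      (((Real.sinh u + u * Real.cosh u) * Real.cosh u - u * Real.sinh u * Real.sinh u) /
        Real.cosh u ^ 2 - Real.sinh u / Real.cosh u) u := by
  have h1 : HasDerivAt (fun u : ℝ => u * Real.sinh u)
      (1 * Real.sinh u + u * Real.cosh u) u :=
    (hasDerivAt_id u).mul (Real.hasDerivAt_sinh u)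
  have h2 := (h1.div (Real.hasDerivAt_cosh u) (Real.cosh_pos u).ne')
  have h3 : HasDerivAt (fun u : ℝ => Real.log (Real.cosh u))
      (Real.sinh u / Real.cosh u) u :=
    (Real.hasDerivAt_cosh u).log (Real.cosh_pos u).ne'
  have := h2.sub h3
  refine this.congr_deriv ?_
  ring

private lemma key (u : ℝ) (hu : 0 < u) :
    Real.log (Real.cosh u) < u * Real.sinh u / Real.cosh u := by
  have hmono : StrictMonoOn
      (fun u : ℝ => u * Real.sinh u / Real.cosh u - Real.log (Real.cosh u)) (Set.Ici 0) := by
    apply strictMonoOn_of_deriv_pos (convex_Ici 0)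
    · exact fun v _ => ((gderiv v).continuousAt).continuousWithinAt
    · intro v hv
      rw [interior_Ici] at hv
      rw [(gderiv v).deriv]
      have hc := Real.cosh_pos v
      have hid : Real.cosh v ^ 2 - Real.sinh v ^ 2 = 1 := Real.cosh_sq_sub_sinh_sq v
      have : ((Real.sinh v + v * Real.cosh v) * Real.cosh v - v * Real.sinh v * Real.sinh v) /
          Real.cosh v ^ 2 - Real.sinh v / Real.cosh v = v / Real.cosh v ^ 2 := by
        field_simp
        linear_combination v * hid
      rw [this]
      rw [Set.mem_Ioi] at hv
      exact div_pos hv (by positivity)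
  have := hmono (Set.self_mem_Ici) (Set.mem_Ici.2 hu.le) hu
  simp at this
  linarith

private lemma hmono : StrictMonoOn (fun u : ℝ => Real.log (Real.cosh u) / u) (Set.Ioi 0) := by
  have hder : ∀ u : ℝ, 0 < u → HasDerivAt (fun u : ℝ => Real.log (Real.cosh u) / u)
      ((Real.sinh u / Real.cosh u * u - Real.log (Real.cosh u) * 1) / u ^ 2) u := by
    intro u hu
    have h3 : HasDerivAt (fun u : ℝ => Real.log (Real.cosh u))
        (Real.sinh u / Real.cosh u) u :=
      (Real.hasDerivAt_cosh u).log (Real.cosh_pos u).ne'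
    exact h3.div (hasDerivAt_id u) hu.ne'
  apply strictMonoOn_of_deriv_pos (convex_Ioi 0)
  · exact fun v hv => ((hder v hv).continuousAt).continuousWithinAt
  · intro v hv
    rw [interior_Ioi] at hv
    rw [(hder v hv).deriv]
    have hk := key v hv
    have : 0 < Real.sinh v / Real.cosh v * v - Real.log (Real.cosh v) * 1 := by
      have : v * Real.sinh v / Real.cosh v = Real.sinh v / Real.cosh v * v := by ring
      nlinarith [key v hv]
    exact div_pos this (pow_pos (Set.mem_Ioi.1 hv) 2)

theorem stmt_11 (x : ℝ) (hx : x ∈ Set.Ioo 0 (Real.pi / 2)) :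
    StrictAntiOn (fun t : ℝ => Real.cosh (x / t) ^ t) (Set.Ioi 0) := by
  obtain ⟨hx0, _⟩ := hx
  intro s hs t ht hst
  simp only [Set.mem_Ioi] at hs ht
  have hb : (0:ℝ) < x / t := div_pos hx0 (lt_trans hs hst)
  have ha : (0:ℝ) < x / s := div_pos hx0 hs
  have hba : x / t < x / s := div_lt_div_of_pos_left hx0 hs hst
  have h := hmono (Set.mem_Ioi.2 hb) (Set.mem_Ioi.2 ha) hba
  simp only at h
  -- h : log(cosh(x/t))/(x/t) < log(cosh(x/s))/(x/s)
  have hlog : t * Real.log (Real.cosh (x / t)) < s * Real.log (Real.cosh (x / s)) := by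
    rw [div_lt_div_iff₀ hb ha] at h
    have h1 : Real.log (Real.cosh (x / t)) * (x / s) = (t * Real.log (Real.cosh (x / t))) * (x / (s*t)) := by
      field_simp
    have h2 : Real.log (Real.cosh (x / s)) * (x / t) = (s * Real.log (Real.cosh (x / s))) * (x / (s*t)) := by
      field_simp
    rw [h1, h2] at h
    have hpos : 0 < x / (s * t) := div_pos hx0 (mul_pos hs (lt_trans hs hst))
    exact lt_of_mul_lt_mul_right h hpos.le
  have hc1 := Real.cosh_pos (x / s)
  have hc2 := Real.cosh_pos (x / t)
  calc Real.cosh (x / t) ^ t = Real.exp (t * Real.log (Real.cosh (x / t))) := by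
        rw [Real.rpow_def_of_pos hc2]; ring_nf
    _ < Real.exp (s * Real.log (Real.cosh (x / s))) := Real.exp_lt_exp.2 hlog
    _ = Real.cosh (x / s) ^ s := by rw [Real.rpow_def_of_pos hc1]; ring_nf
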